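/- Suppose a graphic nonincreasing degree sequence d_1 ≥ d_2 ≥ ... ≥ d_n satisfies d_k - d_{k+1} ≥ k - 1 for some integer k with 1 ≤ k < n. Then the graph realized by the Havel–Hakimi algorithm contains a clique on at least k vertices. -/

import Mathlib

/-- Sort a list of (vertex, remaining degree) pairs in nonincreasing order of
remaining degree (stable, so ties keep their original order). -/
def sortByRemDegDesc (l : List (ℕ × ℕ)) : List (ℕ × ℕ) :=
  l.mergeSort (fun a b => decide (b.2 ≤ a.2))

/-- The edges produced by the Havel–Hakimi algorithm: in each round, the vertex
with the largest remaining degree `dv` is connected to the `dv` vertices with the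
next-largest remaining degrees, whose remaining degrees are decremented. -/
def hhEdges : ℕ → List (ℕ × ℕ) → List (ℕ × ℕ)
  | 0, _ => []
  | fuel + 1, l =>
    match sortByRemDegDesc l with
    | [] => []
    | (v, dv) :: rest =>
        ((rest.take dv).map fun p => (v, p.1)) ++
          hhEdges fuel (((rest.take dv).map fun p => (p.1, p.2 - 1)) ++ rest.drop dv)

/-- The graph on vertex set `ℕ` (vertices `0, …, d.length - 1`) realized by the
Havel–Hakimi algorithm from the degree sequence `d`. -/
def hhGraph (d : List ℕ) : SimpleGraph ℕ :=
  SimpleGraph.fromRel fun a b => (a, b) ∈ hhEdges d.length (d.zipIdx.map Prod.swap)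

/-- A list of nonnegative integers is graphic if it is the degree sequence of a
simple graph. -/
def IsGraphicList (d : List ℕ) : Prop :=
  ∃ (G : SimpleGraph (Fin d.length)) (_ : DecidableRel G.Adj),
    ∀ i : Fin d.length, G.degree i = d.get i

lemma HH.sorted_sort (l : List (ℕ × ℕ)) :
    (sortByRemDegDesc l).Pairwise (fun a b : ℕ × ℕ => b.2 ≤ a.2) := by
  have := List.pairwise_mergeSort (le := fun a b : ℕ × ℕ => decide (b.2 ≤ a.2))
    (by intro a b c hab hbc; simp only [decide_eq_true_eq] at *; omega)
    (by intro a b; simpa using Nat.le_total b.2 a.2) l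
  exact this.imp (by intro a b h; simpa using h)

lemma HH.perm_sort (l : List (ℕ × ℕ)) : (sortByRemDegDesc l).Perm l :=
  List.mergeSort_perm l _

lemma HH.takeWhile_eq_filter {B : ℕ} : ∀ {s : List (ℕ × ℕ)},
    s.Pairwise (fun a b : ℕ × ℕ => b.2 ≤ a.2) →
    s.takeWhile (fun x => decide (B < x.2)) = s.filter (fun x => decide (B < x.2)) := by
  intro s
  induction s with
  | nil => simp
  | cons x xs ih =>
    intro hp
    rw [List.pairwise_cons] at hp
    by_cases hx : B < x.2
    · simp [List.takeWhile_cons, List.filter_cons, hx, ih hp.2]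
    · have h1 : xs.filter (fun x => decide (B < x.2)) = [] := by
        rw [List.filter_eq_nil_iff]
        intro y hy
        have := hp.1 y hy
        simp only [decide_eq_true_eq]
        omega
      simp [List.takeWhile_cons, List.filter_cons, hx, h1]

lemma HH.sorted_split {s U R : List (ℕ × ℕ)} {B : ℕ}
    (hp : s.Pairwise (fun a b : ℕ × ℕ => b.2 ≤ a.2))
    (hperm : s.Perm (U ++ R)) (hU : ∀ x ∈ U, B < x.2) (hR : ∀ x ∈ R, x.2 ≤ B) :
    (s.take U.length).Perm U ∧ (s.drop U.length).Perm R := by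
  set P : ℕ × ℕ → Bool := fun x => decide (B < x.2) with hP
  have hfU : (U ++ R).filter P = U := by
    rw [List.filter_append, List.filter_eq_self.2 (by intro x hx; simpa [hP] using hU x hx),
      List.filter_eq_nil_iff.2 (by intro x hx; simp only [hP, decide_eq_true_eq, not_lt]
                                   exact hR x hx),
      List.append_nil]
  have h1 : (s.takeWhile P).Perm U := by
    rw [HH.takeWhile_eq_filter hp]
    exact (hperm.filter P).trans (by rw [hfU])
  have hlen : (s.takeWhile P).length = U.length := h1.length_eq
  have htw : s.take U.length = s.takeWhile P := by
    conv_lhs => rw [← List.takeWhile_append_dropWhile (p := P) (l := s)]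
    rw [List.take_left' hlen]
  have hdw : s.drop U.length = s.dropWhile P := by
    conv_lhs => rw [← List.takeWhile_append_dropWhile (p := P) (l := s)]
    rw [List.drop_left' hlen]
  refine ⟨htw ▸ h1, ?_⟩
  rw [hdw]
  have hall : (s.takeWhile P ++ s.dropWhile P).Perm (U ++ R) := by
    rw [List.takeWhile_append_dropWhile]; exact hperm
  have hm : (↑(s.takeWhile P) + ↑(s.dropWhile P) : Multiset (ℕ × ℕ)) = ↑U + ↑R := by
    rw [Multiset.coe_add, Multiset.coe_add]
    exact Multiset.coe_eq_coe.2 hall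
  have h1' : (↑(s.takeWhile P) : Multiset (ℕ × ℕ)) = ↑U := Multiset.coe_eq_coe.2 h1
  rw [h1'] at hm
  exact Multiset.coe_eq_coe.1 (add_left_cancel hm)

lemma HH.main : ∀ (n fuel : ℕ) (l U R : List (ℕ × ℕ)) (B : ℕ),
    n - 1 ≤ fuel → l.Perm (U ++ R) → (∀ x ∈ U, B + (n - 1) ≤ x.2) →
    (∀ x ∈ R, x.2 ≤ B) → U.length = n → (U.map Prod.fst).Nodup →
    ∀ a b, a ∈ U.map Prod.fst → b ∈ U.map Prod.fst → a ≠ b →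
      (a, b) ∈ hhEdges fuel l ∨ (b, a) ∈ hhEdges fuel l := by
  intro n
  induction n with
  | zero =>
    intro fuel l U R B _ _ _ _ hlen _ a b ha _ _
    rw [List.length_eq_zero_iff] at hlen
    subst hlen; simp at ha
  | succ n ih =>
    intro fuel l U R B hfuel hperm hU hR hlen hnd a b ha hb hab
    rcases n with _ | m
    · -- U has one element: a = b, contradiction
      rw [List.length_eq_one_iff] at hlen
      obtain ⟨u, rfl⟩ := hlen
      simp at ha hb
      exact absurd (ha.trans hb.symm) hab
    -- now U.length = m + 2
    rcases fuel with _ | f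
    · omega
    set s := sortByRemDegDesc l with hs_def
    have hs_perm : s.Perm (U ++ R) := (HH.perm_sort l).trans hperm
    have hs_sorted := HH.sorted_sort l
    have hUB : ∀ x ∈ U, B < x.2 := fun x hx => by have := hU x hx; omega
    obtain ⟨h1, h2⟩ := HH.sorted_split hs_sorted hs_perm hUB hR
    rw [hlen] at h1 h2
    have hslen : s.length = (m + 2) + R.length := by
      rw [hs_perm.length_eq, List.length_append, hlen]
    obtain ⟨p, t, hs⟩ : ∃ p t, s = p :: t :=
      List.exists_cons_of_ne_nil (by intro h; rw [h] at hslen; simp at hslen; omega)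
    have htlen : t.length = m + 1 + R.length := by
      have : s.length = t.length + 1 := by rw [hs]; simp
      omega
    -- first m+2 of s: p :: t.take (m+1)
    have htake : s.take (m + 2) = p :: t.take (m + 1) := by rw [hs]; rfl
    rw [htake] at h1
    have hdrop : s.drop (m + 2) = t.drop (m + 1) := by rw [hs]; rfl
    rw [hdrop] at h2
    have hpU : p ∈ U := h1.mem_iff.1 List.mem_cons_self
    have hpdeg : B + (m + 1) ≤ p.2 := hU p hpU
    -- split U around p
    obtain ⟨U₁, U₂, hUsplit⟩ : ∃ U₁ U₂, U = U₁ ++ p :: U₂ := List.append_of_mem hpU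
    set U₀ : List (ℕ × ℕ) := U₁ ++ U₂ with hU₀
    have hU₀perm : U.Perm (p :: U₀) := by
      rw [hUsplit, hU₀]
      exact List.perm_middle
    have hU₀sub : U₀.Sublist U := by
      rw [hUsplit, hU₀]
      exact (List.sublist_cons_self p U₂).append_left U₁
    have hterase : (t.take (m + 1)).Perm U₀ := by
      have h3 : (p :: t.take (m + 1)).Perm (p :: U₀) := h1.trans hU₀perm
      exact h3.cons_inv
    -- unfold hhEdges
    obtain ⟨v, dv, rfl⟩ : ∃ v dv, p = (v, dv) := ⟨p.1, p.2, rfl⟩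
    have hpdeg' : B + (m + 1) ≤ dv := hpdeg
    have hdv : m + 1 ≤ dv := by omega
    have hedges : hhEdges (f + 1) l =
        ((t.take dv).map fun q => (v, q.1)) ++
          hhEdges f (((t.take dv).map fun q => (q.1, q.2 - 1)) ++ t.drop dv) := by
      rw [hhEdges]
      rw [← hs_def, hs]
    -- split t.take dv
    have htsplit : t.take dv = t.take (m + 1) ++ (t.drop (m + 1)).take (dv - (m + 1)) := by
      conv_lhs => rw [show dv = (m + 1) + (dv - (m + 1)) by omega]
      exact List.take_add (l := t) (i := m + 1) (j := dv - (m + 1))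
    -- labels of the erased-U
    have hlabel : ∀ c, c ∈ U.map Prod.fst → c ≠ v → c ∈ (t.take (m + 1)).map Prod.fst := by
      intro c hc hcv
      rw [List.mem_map] at hc
      obtain ⟨q, hqU, hq1⟩ := hc
      have hqne : q ≠ (v, dv) := by
        intro h; rw [h] at hq1; exact hcv hq1.symm
      have hq0 : q ∈ U₀ := by
        rw [hUsplit] at hqU
        rw [hU₀, List.mem_append] at *
        rcases hqU with h | h
        · exact Or.inl h
        · rcases List.mem_cons.1 h with h' | h'
          · exact absurd h' hqne
          · exact Or.inr h'
      exact List.mem_map.2 ⟨q, hterase.mem_iff.2 hq0, hq1⟩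
    have hvU : v ∈ U.map Prod.fst := List.mem_map.2 ⟨(v, dv), hpU, rfl⟩
    -- direct edge helper
    have hdirect : ∀ c, c ∈ (t.take (m + 1)).map Prod.fst → (v, c) ∈ hhEdges (f + 1) l := by
      intro c hc
      rw [hedges]
      apply List.mem_append_left
      rw [List.mem_map] at hc ⊢
      obtain ⟨q, hq, hq1⟩ := hc
      refine ⟨q, ?_, by rw [hq1]⟩
      rw [htsplit]
      exact List.mem_append_left _ hq
    by_cases hav : a = v
    · subst hav
      exact Or.inl (hdirect b (hlabel b hb (fun h => hab h.symm)))
    by_cases hbv : b = v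
    · subst hbv
      exact Or.inr (hdirect a (hlabel a ha hav))
    -- recursive case
    have haU' := hlabel a ha hav
    have hbU' := hlabel b hb hbv
    set U' : List (ℕ × ℕ) := (t.take (m + 1)).map fun q => (q.1, q.2 - 1) with hU'def
    set R' : List (ℕ × ℕ) :=
      (((t.drop (m + 1)).take (dv - (m + 1))).map fun q => (q.1, q.2 - 1)) ++ t.drop dv
      with hR'def
    have hl' : (((t.take dv).map fun q => (q.1, q.2 - 1)) ++ t.drop dv) = U' ++ R' := by
      rw [htsplit, List.map_append, hU'def, hR'def, List.append_assoc]
    have hrec := ih f (((t.take dv).map fun q => (q.1, q.2 - 1)) ++ t.drop dv) U' R' B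
      (by omega)
      (by rw [hl'])
      (by
        intro x hx
        rw [hU'def, List.mem_map] at hx
        obtain ⟨q, hq, rfl⟩ := hx
        have hqU : q ∈ U := hU₀sub.subset (hterase.mem_iff.1 hq)
        have := hU q hqU
        simp only
        omega)
      (by
        intro x hx
        rw [hR'def, List.mem_append] at hx
        rcases hx with hx | hx
        · rw [List.mem_map] at hx
          obtain ⟨q, hq, rfl⟩ := hx
          have hqR : q ∈ R := h2.mem_iff.1 (List.take_subset _ _ hq)
          have := hR q hqR
          simp only
          omega
        · have : x ∈ t.drop (m + 1) := by
            have : t.drop dv = (t.drop (m + 1)).drop (dv - (m + 1)) := by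
              rw [List.drop_drop]
              congr 1
              omega
            rw [this] at hx
            exact List.drop_subset _ _ hx
          exact hR x (h2.mem_iff.1 this))
      (by
        rw [hU'def, List.length_map, List.length_take]
        omega)
      (by
        have : U'.map Prod.fst = (t.take (m + 1)).map Prod.fst := by
          rw [hU'def, List.map_map]
          rfl
        rw [this]
        have hperm' : ((t.take (m + 1)).map Prod.fst).Perm (U₀.map Prod.fst) :=
          hterase.map Prod.fst
        refine hperm'.nodup_iff.2 ?_
        exact hnd.sublist (hU₀sub.map Prod.fst))
      a b
      (by
        have : U'.map Prod.fst = (t.take (m + 1)).map Prod.fst := by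
          rw [hU'def, List.map_map]; rfl
        rw [this]; exact haU')
      (by
        have : U'.map Prod.fst = (t.take (m + 1)).map Prod.fst := by
          rw [hU'def, List.map_map]; rfl
        rw [this]; exact hbU')
      hab
    rw [hedges]
    rcases hrec with h | h
    · exact Or.inl (List.mem_append_right _ h)
    · exact Or.inr (List.mem_append_right _ h)

/-- If a graphic nonincreasing sequence `d₁ ≥ … ≥ d_n` satisfies
`d_k - d_{k+1} ≥ k - 1` (1-indexed; here 0-indexed as `d.get (k-1) - d.get k`),
then the Havel–Hakimi realization contains a clique on at least `k` vertices. -/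
theorem hhGraph_has_clique (d : List ℕ) (hsorted : d.Pairwise (· ≥ ·))
    (hgraphic : IsGraphicList d) (k : ℕ) (hk1 : 1 ≤ k) (hk2 : k < d.length)
    (hgap : d.get ⟨k - 1, by omega⟩ - d.get ⟨k, hk2⟩ ≥ k - 1) :
    ∃ s : Finset ℕ, k ≤ s.card ∧ (hhGraph d).IsClique ↑s := by
  classical
  set n := d.length with hn
  have henlen : (d.zipIdx.map Prod.swap).length = n := by rw [List.length_map, List.length_zipIdx]
  set B : ℕ := d.get ⟨k, hk2⟩ with hB
  have hBd : B = d[k] := rfl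
  have hsorted' : ∀ i j (hi : i < n) (hj : j < n), i ≤ j → d[j] ≤ d[i] := by
    intro i j hi hj hij
    rcases Nat.lt_or_ge i j with h | h
    · exact List.pairwise_iff_getElem.1 hsorted i j hi hj h
    · have : i = j := by omega
      subst this; exact le_refl _
  have hgap' : d[k] + (k - 1) ≤ d[k - 1]'(by omega) := by
    have h1 : d[k] ≤ d[k - 1]'(by omega) := hsorted' (k - 1) k (by omega) hk2 (by omega)
    have h2 : d[k - 1]'(by omega) - d[k] ≥ k - 1 := hgap
    omega
  -- U and R
  set U : List (ℕ × ℕ) := (d.zipIdx.map Prod.swap).take k with hU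
  set R : List (ℕ × ℕ) := (d.zipIdx.map Prod.swap).drop k with hR
  have hmemU : ∀ x ∈ U, ∃ i, i < k ∧ ∃ (h : i < n), x = (i, d[i]) := by
    intro x hx
    rw [hU, List.mem_iff_getElem] at hx
    obtain ⟨i, hi, hix⟩ := hx
    have hi' : i < k := by
      have := hi
      rw [List.length_take, henlen] at this
      omega
    refine ⟨i, hi', by omega, ?_⟩
    simp only [List.getElem_take, List.getElem_map, List.getElem_zipIdx, Prod.swap_prod_mk, Nat.zero_add] at hix
    exact hix.symm
  have hmemR : ∀ x ∈ R, ∃ i, k ≤ i ∧ ∃ (h : i < n), x = (i, d[i]) := by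
    intro x hx
    rw [hR, List.mem_iff_getElem] at hx
    obtain ⟨i, hi, hix⟩ := hx
    rw [List.length_drop, henlen] at hi
    simp only [List.getElem_drop, List.getElem_map, List.getElem_zipIdx, Prod.swap_prod_mk, Nat.zero_add] at hix
    refine ⟨k + i, by omega, by omega, hix.symm⟩
  have hmain := HH.main k n (d.zipIdx.map Prod.swap) U R B
    (by omega)
    (by rw [hU, hR, List.take_append_drop])
    (by
      intro x hx
      obtain ⟨i, hik, hin, rfl⟩ := hmemU x hx
      have h1 : d[k - 1]'(by omega) ≤ d[i] := hsorted' i (k - 1) (by omega) (by omega) (by omega)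
      simp only [hBd]
      omega)
    (by
      intro x hx
      obtain ⟨i, hik, hin, rfl⟩ := hmemR x hx
      have : d[i] ≤ d[k] := hsorted' k i hk2 hin hik
      simpa [hBd] using this)
    (by rw [hU, List.length_take, henlen]; omega)
    (by
      have : U.map Prod.fst = List.range k := by
        rw [hU, List.map_take, List.map_map, show (Prod.fst ∘ Prod.swap : ℕ × ℕ → ℕ) = Prod.snd from rfl, List.zipIdx_map_snd, ← List.range_eq_range', ← hn, List.take_range]
        congr 1
        omega
      rw [this]
      exact List.nodup_range)
  have hUfst : U.map Prod.fst = List.range k := by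
    rw [hU, List.map_take, List.map_map, show (Prod.fst ∘ Prod.swap : ℕ × ℕ → ℕ) = Prod.snd from rfl, List.zipIdx_map_snd, ← List.range_eq_range', ← hn, List.take_range]
    congr 1
    omega
  refine ⟨Finset.range k, by simp, ?_⟩
  intro a ha b hb hab
  simp only [Finset.coe_range, Set.mem_Iio] at ha hb
  rw [hhGraph, SimpleGraph.fromRel_adj]
  refine ⟨hab, ?_⟩
  exact hmain a b (by rw [hUfst]; exact List.mem_range.2 ha)
    (by rw [hUfst]; exact List.mem_range.2 hb) hab
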